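/- arXiv:math/0605369 — 4 statements merged into one kernel-verified Lean document; each statement's English description precedes it below -/
import Mathlib

section
/- Let W and W' be analytic submanifolds appearing in two locally finite partitions of a complex analytic set X. If W is connected, then there exists a unique element W' of the second partition such that the closure of W ∩ W' equals the closure of W. -/
open Set Topology

set_option maxHeartbeats 1000000

noncomputable section

/-- The ambient space `ℂ^{n+1}`. -/
abbrev Amb (n : ℕ) := Fin (n + 1) → ℂ

/-- Covectors: continuous linear forms on `ℂ^{n+1}` (cotangent fiber). -/
abbrev Cov (n : ℕ) := (Fin (n + 1) → ℂ) →L[ℂ] ℂ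

/-- `A` is a (closed) complex analytic subset of the open set `U`: locally on `U`
it is the common zero set of a family of holomorphic functions. -/
def IsAnalyticSubsetOf {n : ℕ} (U A : Set (Amb n)) : Prop :=
  A ⊆ U ∧ ∀ x ∈ U, ∃ V : Set (Amb n), IsOpen V ∧ x ∈ V ∧ V ⊆ U ∧
    ∃ (ι : Type) (f : ι → Amb n → ℂ),
      (∀ i, AnalyticOnNhd ℂ (f i) V) ∧ A ∩ V = {y ∈ V | ∀ i, f i y = 0}

/-- `M` is a `d`-dimensional complex submanifold of the open set `U`:
locally it is the zero set of a holomorphic submersion to `ℂ^{n+1-d}`. -/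
def IsSubmanifoldDim {n : ℕ} (U M : Set (Amb n)) (d : ℕ) : Prop :=
  M ⊆ U ∧ ∀ x ∈ M, ∃ V : Set (Amb n), IsOpen V ∧ x ∈ V ∧ V ⊆ U ∧
    ∃ g : Amb n → (Fin (n + 1 - d) → ℂ),
      AnalyticOnNhd ℂ g V ∧ (∀ y ∈ V, Function.Surjective (fderiv ℂ g y)) ∧
      M ∩ V = {y ∈ V | g y = 0}

/-- The conormal space `T^*_M 𝒰 ⊆ T^*𝒰 = 𝒰 × (ℂ^{n+1})^*`. -/
def conormal {n : ℕ} (M : Set (Amb n)) : Set (Amb n × Cov n) :=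
  {p | p.1 ∈ M ∧ ∀ v ∈ tangentConeAt ℂ M p.1, p.2 v = 0}

/-- The relative conormal space `T^*_{f|_M} 𝒰`. -/
def relConormal {n : ℕ} (f : Amb n → ℂ) (M : Set (Amb n)) : Set (Amb n × Cov n) :=
  {p | p.1 ∈ M ∧ ∀ v ∈ tangentConeAt ℂ M p.1, fderiv ℂ f p.1 v = 0 → p.2 v = 0}

/-- Whitney's condition (a) for the pair `(W, M)` (at every point of `M`),
in conormal terms: the fiber of `closure (T^*_W 𝒰)` over any `x ∈ M` is
contained in the fiber of `T^*_M 𝒰`. -/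
def WhitneyA {n : ℕ} (W M : Set (Amb n)) : Prop :=
  ∀ x ∈ M, ∀ η : Cov n, (x, η) ∈ closure (conormal W) →
    ∀ v ∈ tangentConeAt ℂ M x, η v = 0

/-- Thom's `a_f` condition for the pair `(W, M)` (at every point of `M`),
in conormal terms. -/
def AfCond {n : ℕ} (f : Amb n → ℂ) (W M : Set (Amb n)) : Prop :=
  ∀ x ∈ M, ∀ η : Cov n, (x, η) ∈ closure (relConormal f W) →
    ∀ v ∈ tangentConeAt ℂ M x, fderiv ℂ f x v = 0 → η v = 0

/-- A complex analytic partition of `X ⊆ U` into connected analytic submanifolds,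
with analytic closures and frontiers. -/
structure AnalyticPartition {n : ℕ} (U X : Set (Amb n)) : Type 1 where
  strata : Set (Set (Amb n))
  locFin : LocallyFinite (fun W : strata => (W : Set (Amb n)))
  pairwiseDisj : strata.PairwiseDisjoint id
  covers : ⋃₀ strata = X
  submanifold : ∀ W ∈ strata, ∃ d, IsSubmanifoldDim U W d
  conn : ∀ W ∈ strata, IsConnected W
  closure_analytic : ∀ W ∈ strata, IsAnalyticSubsetOf U (closure W ∩ U)
  frontier_analytic : ∀ W ∈ strata, IsAnalyticSubsetOf U ((closure W \ W) ∩ U)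

/-- `A` (represented by its family of vanishing-cycle supports `suppPhi g = supp φ_g[-1]A`)
is φ-constructible along `M`: for every point `x ∈ M` and every analytic germ
`g : (X,x) → (ℂ,0)` with `x` a regular point of `g|_M`, `x ∉ supp φ_g[-1]A`. -/
def PhiConstrAlong {n : ℕ} (suppPhi : (Amb n → ℂ) → Set (Amb n)) (M : Set (Amb n)) : Prop :=
  ∀ x ∈ M, ∀ g : Amb n → ℂ, AnalyticAt ℂ g x → g x = 0 →
    (∃ v ∈ tangentConeAt ℂ M x, fderiv ℂ g x v ≠ 0) → x ∉ suppPhi g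

/-- The fundamental compatibility (Theorem 2.10 of the paper):
`x ∈ supp φ_g[-1]A` if and only if `(x, d_x g) ∈ SS(A)`. -/
def SuppSSCompat {n : ℕ} (suppPhi : (Amb n → ℂ) → Set (Amb n))
    (SS : Set (Amb n × Cov n)) : Prop :=
  ∀ (g : Amb n → ℂ) (x : Amb n), AnalyticAt ℂ g x → g x = 0 →
    (x ∈ suppPhi g ↔ (x, fderiv ℂ g x) ∈ SS)

/-- Zero locus of a set of polynomials. -/
def mvZeros {n : ℕ} (S : Set (MvPolynomial (Fin (n + 1)) ℂ)) : Set (Amb n) :=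
  {x | ∀ p ∈ S, MvPolynomial.eval x p = 0}

/-- `C` is the affine cone defined by a family of homogeneous polynomials. -/
def IsAlgCone {n : ℕ} (C : Set (Amb n)) : Prop :=
  ∃ S : Set (MvPolynomial (Fin (n + 1)) ℂ),
    (∀ p ∈ S, ∃ d, MvPolynomial.IsHomogeneous p d) ∧ C = mvZeros S

/-- The dimension of the affine cone `C`, as the Krull dimension of its coordinate ring.
(The dimension of the associated projective set is this minus one.) -/
def coneDim {n : ℕ} (C : Set (Amb n)) : WithBot ℕ∞ :=
  ringKrullDim (MvPolynomial (Fin (n + 1)) ℂ ⧸ MvPolynomial.vanishingIdeal ℂ C)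

/-- The affine cone over a subset of projective space. -/
def projCone {n : ℕ} (V : Set (Projectivization ℂ (Amb n))) : Set (Amb n) :=
  insert 0 {x | ∃ h : x ≠ 0, Projectivization.mk ℂ x h ∈ V}

/-- Coordinates on the dual space. -/
def dualCoords {n : ℕ} (η : Cov n) : Amb n := fun i => η (Pi.single i (1 : ℂ))

/-- The affine cone over a subset of the projectivized cotangent fiber `ℙ((T^*𝒰)_p)`. -/
def dualProjCone {n : ℕ} (V : Set (Projectivization ℂ (Cov n))) : Set (Amb n) :=
  dualCoords '' (insert 0 {η : Cov n | ∃ h : η ≠ 0, Projectivization.mk ℂ η h ∈ V})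

/-- `V ⊆ ℙ((T^*𝒰)_p)` is a projective algebraic subset of dimension `d`. -/
def IsDualProjAlgOfDim {n : ℕ} (V : Set (Projectivization ℂ (Cov n))) (d : ℕ) : Prop :=
  IsAlgCone (dualProjCone V) ∧ coneDim (dualProjCone V) = ((d + 1 : ℕ) : WithBot ℕ∞)

/-- `A` is weakly φ-constructible with respect to the partition with the given strata:
at each point `p` of a positive-dimensional stratum `W` there is a projective algebraic
set `V_p ⊆ ℙ((T^*𝒰)_p)` of dimension `dim W - 1` of covectors `𝔩` with
`p ∉ supp φ_{𝔩 - 𝔩(p)}[-1]A`. -/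
def WeaklyPhiConstr {n : ℕ} (suppPhi : (Amb n → ℂ) → Set (Amb n))
    (strata : Set (Set (Amb n))) (dim : Set (Amb n) → ℕ) : Prop :=
  ∀ W ∈ strata, 0 < dim W → ∀ p ∈ W,
    ∃ V : Set (Projectivization ℂ (Cov n)),
      IsDualProjAlgOfDim V (dim W - 1) ∧
      ∀ (l : Cov n) (h : l ≠ 0), Projectivization.mk ℂ l h ∈ V →
        p ∉ suppPhi (fun y => l y - l p)

lemma exists_chart {n : ℕ} {U W : Set (Amb n)} {d : ℕ} (hsub : IsSubmanifoldDim U W d)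
    {x : Amb n} (hx : x ∈ W) {N : Set (Amb n)} (hN : IsOpen N) (hxN : x ∈ N) :
    ∃ (K : Submodule ℂ (Amb n)) (B : Set K) (φ : K → Amb n) (N' : Set (Amb n)),
      IsOpen B ∧ IsPreconnected B ∧ B.Nonempty ∧ AnalyticOnNhd ℂ φ B ∧
      φ '' B ⊆ W ∩ N ∧ IsOpen N' ∧ x ∈ N' ∧ N' ∩ W ⊆ φ '' B := by
  obtain ⟨hWU, hloc⟩ := hsub
  obtain ⟨V, hVopen, hxV, hVU, g, hg, hsurj, hWV⟩ := hloc x hx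
  set L : Amb n →L[ℂ] (Fin (n + 1 - d) → ℂ) := fderiv ℂ g x with hL
  have hLsurj : Function.Surjective L := hsurj x hxV
  obtain ⟨R, hR⟩ := L.exists_right_inverse_of_surjective (LinearMap.range_eq_top.2 hLsurj)
  have hRL : ∀ v, L (R v) = v := fun v =>
    congrArg (fun (T : (Fin (n + 1 - d) → ℂ) →L[ℂ] (Fin (n + 1 - d) → ℂ)) => T v) hR
  set K : Submodule ℂ (Amb n) := LinearMap.ker (L : Amb n →ₗ[ℂ] (Fin (n + 1 - d) → ℂ)) with hK
  have hmem : ∀ y : Amb n, y - R (L y) ∈ K := by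
    intro y
    simp only [hK, LinearMap.mem_ker, ContinuousLinearMap.coe_coe, map_sub, hRL, sub_self]
  set projK : Amb n →L[ℂ] K :=
    (ContinuousLinearMap.id ℂ (Amb n) - R.comp L).codRestrict K (fun y => hmem y) with hprojK
  have hprojK_apply : ∀ y : Amb n, (projK y : Amb n) = y - R (L y) := fun y => rfl
  set M : Amb n →L[ℂ] K × (Fin (n + 1 - d) → ℂ) := projK.prod L with hM
  have hMbij : Function.Bijective M := by
    constructor
    · intro v w hvw
      have h1 : (projK v : Amb n) = (projK w : Amb n) := by
        have := congrArg Prod.fst hvw; exact congrArg Subtype.val this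
      have h2 : L v = L w := congrArg Prod.snd hvw
      rw [hprojK_apply, hprojK_apply, h2] at h1
      exact sub_left_inj.mp h1
    · rintro ⟨k, w⟩
      refine ⟨(k : Amb n) + R w, ?_⟩
      have hk : L (k : Amb n) = 0 := k.2
      have hLv : L ((k : Amb n) + R w) = w := by simp [map_add, hk, hRL]
      have h1 : M ((k : Amb n) + R w) = (projK ((k : Amb n) + R w), L ((k : Amb n) + R w)) := rfl
      rw [h1, hLv]
      refine Prod.ext ?_ rfl
      apply Subtype.ext
      rw [hprojK_apply, hLv]
      abel
  set i := (LinearEquiv.ofBijective (M.toLinearMap)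
      (by exact hMbij)).toContinuousLinearEquiv with hi
  have hiM : (i : Amb n →L[ℂ] K × (Fin (n + 1 - d) → ℂ)) = M := by
    apply ContinuousLinearMap.coe_injective
    ext1 y
    rfl
  have hganx : AnalyticAt ℂ g x := hg x hxV
  have hHan : AnalyticAt ℂ (fun y => (projK y, g y)) x := (projK.analyticAt x).prod hganx
  have hHderiv : HasFDerivAt (fun y => (projK y, g y)) M x := by
    rw [hM]
    exact HasFDerivAt.prodMk (projK.hasFDerivAt) (hganx.differentiableAt.hasFDerivAt)
  have hstrict : HasStrictFDerivAt (fun y => (projK y, g y))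
      (i : Amb n →L[ℂ] K × (Fin (n + 1 - d) → ℂ)) x := by
    have h := hHan.hasStrictFDerivAt
    rwa [hHderiv.fderiv, ← hiM] at h
  set ph := HasStrictFDerivAt.toOpenPartialHomeomorph _ hstrict with hph
  have hph_coe : (ph : Amb n → K × (Fin (n + 1 - d) → ℂ)) = fun y => (projK y, g y) :=
    HasStrictFDerivAt.toOpenPartialHomeomorph_coe hstrict
  have hx_src : x ∈ ph.source := HasStrictFDerivAt.mem_toOpenPartialHomeomorph_source hstrict
  obtain ⟨p, hp⟩ := hHan
  have hp1 : p 1 = (continuousMultilinearCurryFin1 ℂ (Amb n) (K × (Fin (n + 1 - d) → ℂ))).symm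
      (i : Amb n →L[ℂ] K × (Fin (n + 1 - d) → ℂ)) := by
    have h1 := hp.hasFDerivAt
    have h2 := h1.unique hHderiv
    rw [hiM, ← h2]
    simp
  have hpph : HasFPowerSeriesAt (↑ph) p x := by rw [hph_coe]; exact hp
  have hsymm := ph.hasFPowerSeriesAt_symm hx_src hpph hp1
  have hgx : g x = 0 := (show x ∈ {y | y ∈ V ∧ g y = 0} from hWV ▸ ⟨hx, hxV⟩).2
  have hHx : (ph : Amb n → K × (Fin (n + 1 - d) → ℂ)) x = (projK x, 0) := by
    rw [hph_coe]; simp [hgx]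
  have hsymm_an : AnalyticAt ℂ (ph.symm) (projK x, 0) := by
    rw [← hHx]; exact ⟨_, hsymm⟩
  have hG1 : IsOpen {z : K × (Fin (n + 1 - d) → ℂ) | AnalyticAt ℂ (ph.symm) z} :=
    isOpen_analyticAt ℂ _
  have hG3 : IsOpen (ph.target ∩ (ph.symm) ⁻¹' (V ∩ N)) :=
    ph.continuousOn_symm.isOpen_inter_preimage ph.open_target (hVopen.inter hN)
  have hGopen : IsOpen ({z : K × (Fin (n + 1 - d) → ℂ) | AnalyticAt ℂ (ph.symm) z} ∩
      (ph.target ∩ (ph.symm) ⁻¹' (V ∩ N))) := hG1.inter hG3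
  have hxG : ((projK x, 0) : K × (Fin (n + 1 - d) → ℂ)) ∈
      {z : K × (Fin (n + 1 - d) → ℂ) | AnalyticAt ℂ (ph.symm) z} ∩
      (ph.target ∩ (ph.symm) ⁻¹' (V ∩ N)) := by
    refine ⟨hsymm_an, ?_, ?_⟩
    · rw [← hHx]; exact ph.map_source hx_src
    · show ph.symm (projK x, 0) ∈ V ∩ N
      rw [← hHx, ph.left_inv hx_src]
      exact ⟨hxV, hxN⟩
  obtain ⟨ε, hε, hball⟩ := Metric.isOpen_iff.1 hGopen _ hxG
  have hjB : ∀ k ∈ Metric.ball (projK x) ε, ((k, 0) : K × (Fin (n + 1 - d) → ℂ)) ∈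
      {z : K × (Fin (n + 1 - d) → ℂ) | AnalyticAt ℂ (ph.symm) z} ∩
      (ph.target ∩ (ph.symm) ⁻¹' (V ∩ N)) := by
    intro k hk
    apply hball
    rw [Metric.mem_ball] at hk ⊢
    rw [Prod.dist_eq]
    exact max_lt hk (by simpa using hε)
  refine ⟨K, Metric.ball (projK x) ε, fun k => ph.symm (k, 0),
    ph.source ∩ (V ∩ N) ∩ projK ⁻¹' Metric.ball (projK x) ε,
    Metric.isOpen_ball, (convex_ball _ _).isPreconnected, Metric.nonempty_ball.2 hε,
    ?_, ?_, ?_, ?_, ?_⟩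
  · intro k hk
    have han := (hjB k hk).1
    have hinner : AnalyticAt ℂ (fun k : K => ((k, 0) : K × (Fin (n + 1 - d) → ℂ))) k :=
      (analyticAt_id).prod analyticAt_const
    have hcomp := AnalyticAt.comp (g := ↑ph.symm)
      (f := fun k : K => ((k, 0) : K × (Fin (n + 1 - d) → ℂ))) (x := k) han hinner
    exact hcomp
  · rintro _ ⟨k, hk, rfl⟩
    obtain ⟨han, htar, hpre⟩ := hjB k hk
    obtain ⟨hyV, hyN⟩ := hpre
    have hr : (ph : Amb n → K × (Fin (n + 1 - d) → ℂ)) (ph.symm (k, 0)) = (k, 0) :=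
      ph.right_inv htar
    rw [hph_coe] at hr
    have hg0 : g (ph.symm (k, 0)) = 0 := congrArg Prod.snd hr
    have : ph.symm (k, 0) ∈ W ∩ V := by rw [hWV]; exact ⟨hyV, hg0⟩
    exact ⟨this.1, hyN⟩
  · have h1 : IsOpen (⇑projK ⁻¹' Metric.ball (projK x) ε) :=
      Metric.isOpen_ball.preimage projK.continuous
    exact (ph.open_source.inter (hVopen.inter hN)).inter h1
  · have h2 : projK x ∈ Metric.ball (projK x) ε := Metric.mem_ball_self hε
    exact ⟨⟨hx_src, hxV, hxN⟩, h2⟩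
  · rintro y ⟨⟨⟨hsrc, hyV, hyN⟩, hyB⟩, hyW⟩
    have hg0 : g y = 0 := (show y ∈ {z | z ∈ V ∧ g z = 0} from hWV ▸ ⟨hyW, hyV⟩).2
    refine ⟨projK y, hyB, ?_⟩
    have heq : ((projK y, 0) : K × (Fin (n + 1 - d) → ℂ)) =
        (ph : Amb n → K × (Fin (n + 1 - d) → ℂ)) y := by
      rw [hph_coe]; simp [hg0]
    show ph.symm (projK y, 0) = y
    rw [heq, ph.left_inv hsrc]

lemma IsAnalyticSubsetOf.closure_inter_subset {n : ℕ} {U A : Set (Amb n)}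
    (h : IsAnalyticSubsetOf U A) : closure A ∩ U ⊆ A := by
  rintro z ⟨hclz, hzU⟩
  obtain ⟨V, hVo, hzV, hVU, ι, f, hfan, hAV⟩ := h.2 z hzU
  have hclz' : z ∈ closure (A ∩ V) := by
    have := (hVo.inter_closure (t := A)) ⟨hzV, hclz⟩
    rwa [inter_comm A V]
  have hz0 : ∀ i, f i z = 0 := by
    intro i
    have hc : ContinuousWithinAt (f i) (A ∩ V) z :=
      ((hfan i z hzV).continuousAt).continuousWithinAt
    have hmem := hc.mem_closure_image hclz'
    have himg : f i '' (A ∩ V) ⊆ {0} := by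
      rintro _ ⟨y, hy, rfl⟩
      have : y ∈ {y | y ∈ V ∧ ∀ i, f i y = 0} := hAV ▸ hy
      exact this.2 i
    have : closure (f i '' (A ∩ V)) ⊆ {0} := by
      simpa using closure_mono himg
    exact this hmem
  have : z ∈ A ∩ V := by rw [hAV]; exact ⟨hzV, hz0⟩
  exact this.1

lemma isNowhereDense_union {X : Type*} [TopologicalSpace X] {s t : Set X}
    (hs : IsNowhereDense s) (ht : IsNowhereDense t) : IsNowhereDense (s ∪ t) := by
  rw [IsNowhereDense, closure_union]
  rw [IsNowhereDense] at hs ht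
  rw [eq_empty_iff_forall_notMem]
  intro z hz
  have hopen : IsOpen (interior (closure s ∪ closure t) \ closure s) :=
    isOpen_interior.sdiff isClosed_closure
  have hsubt : interior (closure s ∪ closure t) \ closure s ⊆ closure t := by
    rintro w ⟨hw, hw2⟩
    rcases interior_subset hw with h | h
    · exact absurd h hw2
    · exact h
  have h1 : interior (closure s ∪ closure t) \ closure s ⊆ interior (closure t) :=
    hopen.subset_interior_iff.2 hsubt
  rw [ht] at h1
  have hzs : z ∈ closure s := by
    by_contra hzs
    exact absurd (h1 ⟨hz, hzs⟩) (notMem_empty z)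
  have h2 : interior (closure s ∪ closure t) \ closure t ⊆ interior (closure s) := by
    apply (isOpen_interior.sdiff isClosed_closure).subset_interior_iff.2
    rintro w ⟨hw, hw2⟩
    rcases interior_subset hw with h | h
    · exact h
    · exact absurd h hw2
  rw [hs] at h2
  have hzt : z ∈ closure t := by
    by_contra hzt
    exact absurd (h2 ⟨hz, hzt⟩) (notMem_empty z)
  -- z is interior point of union, in both closures; consider open set minus one closed set
  -- Use: interior (closure s ∪ closure t) ⊆ closure s already shown pointwise? redo:
  -- every point of the interior is in closure s (else contradiction) hence
  -- interior ⊆ closure s, so interior ⊆ interior (closure s) = ∅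
  have hall : interior (closure s ∪ closure t) ⊆ closure s := by
    intro w hw
    by_contra hws
    exact absurd (h1 ⟨hw, hws⟩) (notMem_empty w)
  have : interior (closure s ∪ closure t) ⊆ interior (closure s) :=
    isOpen_interior.subset_interior_iff.2 hall
  rw [hs] at this
  exact this hz

lemma isNowhereDense_biUnion {X ι : Type*} [TopologicalSpace X] {s : Set ι}
    (hs : s.Finite) {f : ι → Set X} (h : ∀ i ∈ s, IsNowhereDense (f i)) :
    IsNowhereDense (⋃ i ∈ s, f i) := by
  revert h
  refine Set.Finite.induction_on (motive := fun s _ =>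
      (∀ i ∈ s, IsNowhereDense (f i)) → IsNowhereDense (⋃ i ∈ s, f i)) s hs
    (fun _ => by simpa using isNowhereDense_empty) ?_
  intro a t hat htfin ih h
  rw [Set.biUnion_insert]
  exact isNowhereDense_union (h a (mem_insert a t))
    (ih fun i hi => h i (mem_insert_of_mem a hi))

lemma zero_locus_dichotomy {E : Type*} [NormedAddCommGroup E] [NormedSpace ℂ E]
    [CompleteSpace E] {B : Set E} (hB : IsOpen B) (hBc : IsPreconnected B)
    {ι : Type*} {h : ι → E → ℂ} (hh : ∀ j, AnalyticOnNhd ℂ (h j) B) :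
    IsNowhereDense {b ∈ B | ∀ j, h j b = 0} ∨ ∀ b ∈ B, ∀ j, h j b = 0 := by
  set Z := {b ∈ B | ∀ j, h j b = 0} with hZ
  by_cases hnwd : IsNowhereDense Z
  · exact Or.inl hnwd
  right
  rw [IsNowhereDense, eq_empty_iff_forall_notMem] at hnwd
  push_neg at hnwd
  obtain ⟨z, hz⟩ := hnwd
  -- find a point of Z in the open set interior (closure Z), and an open set around it inside Z
  have hzcl : z ∈ closure Z := interior_subset hz
  set Ω := interior (closure Z) ∩ B with hΩ
  have hΩopen : IsOpen Ω := isOpen_interior.inter hB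
  have hΩsub : Ω ⊆ Z := by
    rintro b ⟨hb1, hbB⟩
    refine ⟨hbB, fun j => ?_⟩
    have hbcl : b ∈ closure Z := interior_subset hb1
    have hc : ContinuousWithinAt (h j) Z b := ((hh j b hbB).continuousAt).continuousWithinAt
    have hmem := hc.mem_closure_image hbcl
    have himg : h j '' Z ⊆ {0} := by
      rintro _ ⟨y, hy, rfl⟩
      exact hy.2 j
    have : closure (h j '' Z) ⊆ {0} := by simpa using closure_mono himg
    exact this hmem
  have hΩne : Ω.Nonempty := by
    obtain ⟨w, hwi, hwZ⟩ := mem_closure_iff.1 hzcl _ isOpen_interior hz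
    exact ⟨w, hwi, hwZ.1⟩
  obtain ⟨w, hw⟩ := hΩne
  intro b hb j
  have hev : h j =ᶠ[nhds w] 0 := by
    filter_upwards [hΩopen.mem_nhds hw] with y hy
    exact (hΩsub hy).2 j
  exact (hh j).eqOn_zero_of_preconnected_of_eventuallyEq_zero hBc hw.2 hev hb

lemma frontier_block {n : ℕ} {U X : Set (Amb n)} (P : AnalyticPartition U X)
    {W W₁ W₂ : Set (Amb n)} (hWU : W ⊆ U) (h1 : W₁ ∈ P.strata) (h2 : W₂ ∈ P.strata)
    (hne : W₁ ≠ W₂) {N : Set (Amb n)} (hNo : IsOpen N)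
    (hd1 : N ∩ W ⊆ closure (W ∩ W₁)) (hd2 : N ∩ W ⊆ closure (W ∩ W₂)) :
    N ∩ W ∩ W₁ = ∅ := by
  have hdisj : Disjoint W₁ W₂ := P.pairwiseDisj h1 h2 hne
  have hF := (P.frontier_analytic W₁ h1).closure_inter_subset
  rw [eq_empty_iff_forall_notMem]
  rintro z ⟨⟨hzN, hzW⟩, hzW₁⟩
  have hsub2 : N ∩ (W ∩ W₂) ⊆ (closure W₁ \ W₁) ∩ U := by
    rintro y ⟨hyN, hyW, hyW₂⟩
    refine ⟨⟨?_, ?_⟩, hWU hyW⟩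
    · exact closure_mono inter_subset_right (hd1 ⟨hyN, hyW⟩)
    · intro hyW₁
      exact (Set.disjoint_left.1 hdisj) hyW₁ hyW₂
  have hzcl : z ∈ closure (N ∩ (W ∩ W₂)) := hNo.inter_closure ⟨hzN, hd2 ⟨hzN, hzW⟩⟩
  have hz2 : z ∈ closure ((closure W₁ \ W₁) ∩ U) := closure_mono hsub2 hzcl
  have hz' : z ∈ (closure W₁ \ W₁) ∩ U := hF ⟨hz2, hWU hzW⟩
  exact hz'.1.2 hzW₁

lemma main_local {n : ℕ} {U X : Set (Amb n)} (hXU : X ⊆ U)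
    (P : AnalyticPartition U X) {W : Set (Amb n)} (hWX : W ⊆ X)
    {d : ℕ} (hsub : IsSubmanifoldDim U W d) {x : Amb n} (hx : x ∈ W) :
    ∃ W' ∈ P.strata, ∃ N', IsOpen N' ∧ x ∈ N' ∧ N' ∩ W ⊆ closure (W ∩ W') := by
  have hxU : x ∈ U := hXU (hWX hx)
  obtain ⟨t, ht, htfin⟩ := P.locFin x
  obtain ⟨t₀, ht₀sub, ht₀open, hxt₀⟩ := mem_nhds_iff.1 ht
  set 𝒮 : Set (Set (Amb n)) := {W' ∈ P.strata | (W' ∩ t₀).Nonempty} with h𝒮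
  have h𝒮fin : 𝒮.Finite := by
    have hsub' : 𝒮 ⊆ (fun i : P.strata => (i : Set (Amb n))) ''
        {i : P.strata | ((i : Set (Amb n)) ∩ t).Nonempty} := by
      rintro W' ⟨hW's, hW'ne⟩
      exact ⟨⟨W', hW's⟩, hW'ne.mono (inter_subset_inter_right _ ht₀sub), rfl⟩
    exact (htfin.image _).subset hsub'
  have hclos : ∀ W' : Set (Amb n), ∃ V : Set (Amb n), IsOpen V ∧ x ∈ V ∧
      ∀ _ : W' ∈ 𝒮, V ⊆ U ∧ ∃ (ι : Type) (f : ι → Amb n → ℂ),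
        (∀ i, AnalyticOnNhd ℂ (f i) V) ∧
        (closure W' ∩ U) ∩ V = {y ∈ V | ∀ i, f i y = 0} := by
    intro W'
    by_cases h : W' ∈ 𝒮
    · obtain ⟨V, h1, h2, h3, h4⟩ := (P.closure_analytic W' h.1).2 x hxU
      exact ⟨V, h1, h2, fun _ => ⟨h3, h4⟩⟩
    · exact ⟨univ, isOpen_univ, mem_univ x, fun h' => absurd h' h⟩
  have hfron : ∀ W' : Set (Amb n), ∃ V : Set (Amb n), IsOpen V ∧ x ∈ V ∧
      ∀ _ : W' ∈ 𝒮, V ⊆ U ∧ ∃ (ι : Type) (f : ι → Amb n → ℂ),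
        (∀ i, AnalyticOnNhd ℂ (f i) V) ∧
        ((closure W' \ W') ∩ U) ∩ V = {y ∈ V | ∀ i, f i y = 0} := by
    intro W'
    by_cases h : W' ∈ 𝒮
    · obtain ⟨V, h1, h2, h3, h4⟩ := (P.frontier_analytic W' h.1).2 x hxU
      exact ⟨V, h1, h2, fun _ => ⟨h3, h4⟩⟩
    · exact ⟨univ, isOpen_univ, mem_univ x, fun h' => absurd h' h⟩
  choose VA hVAo hxVA hApay using hclos
  choose VF hVFo hxVF hFpay using hfron
  have hAex : ∀ W', ∀ _ : W' ∈ 𝒮, ∃ (ι : Type) (f : ι → Amb n → ℂ),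
      (∀ i, AnalyticOnNhd ℂ (f i) (VA W')) ∧
      (closure W' ∩ U) ∩ VA W' = {y ∈ VA W' | ∀ i, f i y = 0} :=
    fun W' h => (hApay W' h).2
  have hFex : ∀ W', ∀ _ : W' ∈ 𝒮, ∃ (ι : Type) (f : ι → Amb n → ℂ),
      (∀ i, AnalyticOnNhd ℂ (f i) (VF W')) ∧
      ((closure W' \ W') ∩ U) ∩ VF W' = {y ∈ VF W' | ∀ i, f i y = 0} :=
    fun W' h => (hFpay W' h).2
  choose ιA fA hfAan hAeq using hAex
  choose ιF fF hfFan hFeq using hFex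
  set N : Set (Amb n) := t₀ ∩ ⋂ W' ∈ 𝒮, (VA W' ∩ VF W') with hN
  have hNo : IsOpen N :=
    ht₀open.inter (h𝒮fin.isOpen_biInter fun W' _ => (hVAo W').inter (hVFo W'))
  have hxN : x ∈ N := ⟨hxt₀, mem_biInter fun W' _ => ⟨hxVA W', hxVF W'⟩⟩
  have hNsub : ∀ W' ∈ 𝒮, N ⊆ VA W' ∩ VF W' := by
    intro W' hW' z hz
    exact mem_of_mem_of_subset hz.2 (biInter_subset_of_mem hW')
  obtain ⟨K, B, φ, N', hBo, hBc, hBne, hφan, hφim, hN'o, hxN', hN'sub⟩ :=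
    exists_chart hsub hx hNo hxN
  have hφW : ∀ b ∈ B, φ b ∈ W ∩ N := fun b hb => hφim ⟨b, hb, rfl⟩
  have hφU : ∀ b ∈ B, φ b ∈ U := fun b hb => hXU (hWX (hφW b hb).1)
  have hCiff : ∀ W', ∀ h𝒮' : W' ∈ 𝒮, ∀ b ∈ B,
      ((∀ j, fA W' h𝒮' j (φ b) = 0) ↔ φ b ∈ closure W') := by
    intro W' h𝒮' b hb
    have hba : φ b ∈ VA W' := (hNsub W' h𝒮' (hφW b hb).2).1
    constructor
    · intro hz
      have : φ b ∈ (closure W' ∩ U) ∩ VA W' := by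
        rw [hAeq W' h𝒮']; exact ⟨hba, hz⟩
      exact this.1.1
    · intro hcl
      have : φ b ∈ {y ∈ VA W' | ∀ i, fA W' h𝒮' i y = 0} := by
        rw [← hAeq W' h𝒮']; exact ⟨⟨hcl, hφU b hb⟩, hba⟩
      exact this.2
  have hFiff : ∀ W', ∀ h𝒮' : W' ∈ 𝒮, ∀ b ∈ B,
      ((∀ j, fF W' h𝒮' j (φ b) = 0) ↔ φ b ∈ closure W' \ W') := by
    intro W' h𝒮' b hb
    have hbf : φ b ∈ VF W' := (hNsub W' h𝒮' (hφW b hb).2).2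
    constructor
    · intro hz
      have : φ b ∈ ((closure W' \ W') ∩ U) ∩ VF W' := by
        rw [hFeq W' h𝒮']; exact ⟨hbf, hz⟩
      exact this.1.1
    · intro hcl
      have : φ b ∈ {y ∈ VF W' | ∀ i, fF W' h𝒮' i y = 0} := by
        rw [← hFeq W' h𝒮']; exact ⟨⟨hcl, hφU b hb⟩, hbf⟩
      exact this.2
  -- analyticity of pullbacks
  have hanA : ∀ W', ∀ h𝒮' : W' ∈ 𝒮, ∀ j,
      AnalyticOnNhd ℂ (fun b => fA W' h𝒮' j (φ b)) B := by
    intro W' h𝒮' j b hb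
    have h1 : AnalyticAt ℂ (fA W' h𝒮' j) (φ b) :=
      hfAan W' h𝒮' j (φ b) ((hNsub W' h𝒮' (hφW b hb).2).1)
    have := AnalyticAt.comp (g := fA W' h𝒮' j) (f := φ) (x := b) h1 (hφan b hb)
    exact this
  have hanF : ∀ W', ∀ h𝒮' : W' ∈ 𝒮, ∀ j,
      AnalyticOnNhd ℂ (fun b => fF W' h𝒮' j (φ b)) B := by
    intro W' h𝒮' j b hb
    have h1 : AnalyticAt ℂ (fF W' h𝒮' j) (φ b) :=
      hfFan W' h𝒮' j (φ b) ((hNsub W' h𝒮' (hφW b hb).2).2)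
    have := AnalyticAt.comp (g := fF W' h𝒮' j) (f := φ) (x := b) h1 (hφan b hb)
    exact this
  by_cases hEx : ∃ W', ∃ h𝒮' : W' ∈ 𝒮, (∀ b ∈ B, ∀ j, fA W' h𝒮' j (φ b) = 0) ∧
      IsNowhereDense {b ∈ B | ∀ j, fF W' h𝒮' j (φ b) = 0}
  · -- main case : conclude
    obtain ⟨W', h𝒮', hCfull, hFrnwd⟩ := hEx
    refine ⟨W', h𝒮'.1, N', hN'o, hxN', ?_⟩
    rintro y ⟨hyN', hyW⟩
    obtain ⟨b, hb, rfl⟩ := hN'sub ⟨hyN', hyW⟩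
    rw [mem_closure_iff]
    intro O hOopen hOb
    have hQo : IsOpen (B ∩ φ ⁻¹' O) := by
      have hcont : ContinuousOn φ B := fun b' hb' => (hφan b' hb').continuousAt.continuousWithinAt
      exact hcont.isOpen_inter_preimage hBo hOopen
    have hbQ : b ∈ B ∩ φ ⁻¹' O := ⟨hb, hOb⟩
    have hnot : ¬ (B ∩ φ ⁻¹' O ⊆ closure {b' ∈ B | ∀ j, fF W' h𝒮' j (φ b') = 0}) := by
      intro hsub'
      have : B ∩ φ ⁻¹' O ⊆ interior (closure {b' ∈ B | ∀ j, fF W' h𝒮' j (φ b') = 0}) :=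
        hQo.subset_interior_iff.2 hsub'
      rw [hFrnwd] at this
      exact this hbQ
    obtain ⟨b', hb'Q, hb'ncl⟩ := not_subset.1 hnot
    have hb'B : b' ∈ B := hb'Q.1
    have hb'nF : ¬ (∀ j, fF W' h𝒮' j (φ b') = 0) := by
      intro hj
      exact hb'ncl (subset_closure ⟨hb'B, hj⟩)
    have hφb'cl : φ b' ∈ closure W' :=
      (hCiff W' h𝒮' b' hb'B).1 (hCfull b' hb'B)
    have hφb'W' : φ b' ∈ W' := by
      by_contra hcon
      exact hb'nF ((hFiff W' h𝒮' b' hb'B).2 ⟨hφb'cl, hcon⟩)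
    exact ⟨φ b', hb'Q.2, (hφW b' hb'B).1, hφb'W'⟩
  · -- derive a contradiction
    exfalso
    push_neg at hEx
    have hcover : ∀ b ∈ B, ∃ W', ∃ h𝒮' : W' ∈ 𝒮,
        (∀ j, fA W' h𝒮' j (φ b) = 0) ∧
        IsNowhereDense {b' ∈ B | ∀ j, fA W' h𝒮' j (φ b') = 0} := by
      intro b hb
      have hbX : φ b ∈ X := hWX (hφW b hb).1
      rw [← P.covers] at hbX
      obtain ⟨W', hW'strata, hmem⟩ := hbX
      have h𝒮' : W' ∈ 𝒮 := ⟨hW'strata, ⟨φ b, hmem, (hφW b hb).2.1⟩⟩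
      refine ⟨W', h𝒮', (hCiff W' h𝒮' b hb).2 (subset_closure hmem), ?_⟩
      rcases zero_locus_dichotomy hBo hBc (hanA W' h𝒮') with hnwd | hfull
      · exact hnwd
      · -- C is full, so by hEx the frontier is not nowhere dense, so it is full too
        have hnFr := hEx W' h𝒮' hfull
        rcases zero_locus_dichotomy hBo hBc (hanF W' h𝒮') with hnwd' | hfull'
        · exact absurd hnwd' hnFr
        · have : φ b ∈ closure W' \ W' :=
            (hFiff W' h𝒮' b hb).1 (hfull' b hb)
          exact absurd hmem this.2
    -- B is covered by finitely many nowhere dense sets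
    classical
    set T : Set (Amb n) → Set K := fun W' =>
      if h : W' ∈ 𝒮 then {b' ∈ B | ∀ j, fA W' h j (φ b') = 0} else ∅ with hT
    set 𝒮' : Set (Set (Amb n)) := {W' ∈ 𝒮 | IsNowhereDense (T W')} with h𝒮'def
    have hcov : B ⊆ ⋃ W' ∈ 𝒮', T W' := by
      intro b hb
      obtain ⟨W', h𝒮', hfull, hnwd⟩ := hcover b hb
      have hTW' : T W' = {b' ∈ B | ∀ j, fA W' h𝒮' j (φ b') = 0} := by
        rw [hT]; exact dif_pos h𝒮'
      have h1 : IsNowhereDense (T W') := by rw [hTW']; exact hnwd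
      have h2 : b ∈ T W' := by rw [hTW']; exact ⟨hb, hfull⟩
      exact mem_biUnion ⟨h𝒮', h1⟩ h2
    have hnwdU : IsNowhereDense (⋃ W' ∈ 𝒮', T W') :=
      isNowhereDense_biUnion (h𝒮fin.subset (sep_subset _ _)) (fun W' hW' => hW'.2)
    have hBint : B ⊆ interior (closure (⋃ W' ∈ 𝒮', T W')) :=
      hBo.subset_interior_iff.2 (hcov.trans subset_closure)
    rw [hnwdU] at hBint
    obtain ⟨b, hb⟩ := hBne
    exact (hBint hb)

/-- Lemma 2.2: given two complex analytic partitions `𝒲, 𝒲'` of `X`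
and a (connected) stratum `W ∈ 𝒲`, there is a unique `W' ∈ 𝒲'` with
`closure (W ∩ W') = closure W`. -/
theorem stmt0 {n : ℕ} (U X : Set (Amb n)) (hU : IsOpen U) (hX : IsAnalyticSubsetOf U X)
    (𝒲 𝒲' : AnalyticPartition U X) (W : Set (Amb n)) (hW : W ∈ 𝒲.strata)
    (hWconn : IsConnected W) :
    ∃! W' : Set (Amb n), W' ∈ 𝒲'.strata ∧ closure (W ∩ W') = closure W := by
  have hXU : X ⊆ U := hX.1
  have hWX : W ⊆ X := by rw [← 𝒲.covers]; exact subset_sUnion_of_mem hW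
  have hWU : W ⊆ U := hWX.trans hXU
  obtain ⟨d, hsubd⟩ := 𝒲.submanifold W hW
  obtain ⟨x₀, hx₀⟩ := hWconn.nonempty
  obtain ⟨W'₀, hW'₀, N₀, hN₀o, hx₀N₀, hN₀sub⟩ := main_local hXU 𝒲' hWX hsubd hx₀
  set G : Set (Amb n) → Set (Amb n) := fun W' =>
    ⋃₀ {N | IsOpen N ∧ N ∩ W ⊆ closure (W ∩ W')} with hG
  have hGopen : ∀ W', IsOpen (G W') := fun W' => isOpen_sUnion fun N hN => hN.1
  have hGprop : ∀ W', ∀ z, z ∈ G W' ∩ W → z ∈ closure (W ∩ W') := by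
    rintro W' z ⟨hz1, hz2⟩
    obtain ⟨N, hN, hzN⟩ := hz1
    exact hN.2 ⟨hzN, hz2⟩
  have hGdisj : ∀ W₁, W₁ ∈ 𝒲'.strata → ∀ W₂, W₂ ∈ 𝒲'.strata → W₁ ≠ W₂ →
      W ∩ (G W₁ ∩ G W₂) = ∅ := by
    intro W₁ h1 W₂ h2 hne
    rw [eq_empty_iff_forall_notMem]
    rintro z ⟨hzW, hzG1, hzG2⟩
    obtain ⟨N₁, hN₁, hzN₁⟩ := hzG1
    obtain ⟨N₂, hN₂, hzN₂⟩ := hzG2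
    have hblock := frontier_block 𝒲' hWU h1 h2 hne (hN₁.1.inter hN₂.1)
      (fun y hy => hN₁.2 ⟨hy.1.1, hy.2⟩) (fun y hy => hN₂.2 ⟨hy.1.2, hy.2⟩)
    have hz1 : z ∈ closure ((N₁ ∩ N₂) ∩ (W ∩ W₁)) :=
      (hN₁.1.inter hN₂.1).inter_closure ⟨⟨hzN₁, hzN₂⟩, hN₁.2 ⟨hzN₁, hzW⟩⟩
    have hempty : (N₁ ∩ N₂) ∩ (W ∩ W₁) = ∅ := by
      rw [eq_empty_iff_forall_notMem]
      rintro y ⟨hyN, hyW, hyW₁⟩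
      have : y ∈ N₁ ∩ N₂ ∩ W ∩ W₁ := ⟨⟨hyN, hyW⟩, hyW₁⟩
      rw [hblock] at this
      exact this
    rw [hempty, closure_empty] at hz1
    exact hz1
  have hWsub : W ⊆ G W'₀ := by
    set v : Set (Amb n) := ⋃ W'' ∈ {W'' ∈ 𝒲'.strata | W'' ≠ W'₀}, G W'' with hv
    have hvopen : IsOpen v := isOpen_biUnion fun W'' _ => hGopen W''
    have hcover : W ⊆ G W'₀ ∪ v := by
      intro x hx
      obtain ⟨W', hW', N, hNo, hxN, hNsub⟩ := main_local hXU 𝒲' hWX hsubd hx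
      have hxG : x ∈ G W' := ⟨N, ⟨hNo, hNsub⟩, hxN⟩
      by_cases he : W' = W'₀
      · exact Or.inl (he ▸ hxG)
      · exact Or.inr (mem_biUnion ⟨hW', he⟩ hxG)
    have hUV : W ∩ (G W'₀ ∩ v) = ∅ := by
      rw [eq_empty_iff_forall_notMem]
      rintro z ⟨hzW, hz0, hzv⟩
      rcases mem_iUnion₂.1 hzv with ⟨W'', hW''mem, hzG⟩
      have hd := hGdisj W'₀ hW'₀ W'' hW''mem.1 (Ne.symm hW''mem.2)
      rw [eq_empty_iff_forall_notMem] at hd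
      exact hd z ⟨hzW, hz0, hzG⟩
    by_contra hnot
    rw [not_subset] at hnot
    obtain ⟨z, hzW, hzG⟩ := hnot
    have hzv : z ∈ v := (hcover hzW).resolve_left hzG
    have hWu : (W ∩ G W'₀).Nonempty := ⟨x₀, hx₀, ⟨N₀, ⟨hN₀o, hN₀sub⟩, hx₀N₀⟩⟩
    have hWv : (W ∩ v).Nonempty := ⟨z, hzW, hzv⟩
    obtain ⟨w, hw⟩ := hWconn.isPreconnected (G W'₀) v (hGopen W'₀) hvopen hcover hWu hWv
    rw [hUV] at hw
    exact hw
  have hclos : closure (W ∩ W'₀) = closure W := by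
    apply Subset.antisymm (closure_mono inter_subset_left)
    have hsub : W ⊆ closure (W ∩ W'₀) := fun z hz => hGprop W'₀ z ⟨hWsub hz, hz⟩
    exact closure_minimal hsub isClosed_closure
  refine ⟨W'₀, ⟨hW'₀, hclos⟩, ?_⟩
  rintro W'' ⟨hW''s, hcl''⟩
  by_contra hne
  have hWne : W.Nonempty := hWconn.nonempty
  have hWW''ne : (W ∩ W'').Nonempty := by
    rw [nonempty_iff_ne_empty]
    intro he
    rw [he, closure_empty] at hcl''
    obtain ⟨z, hz⟩ := hWne
    have : z ∈ closure W := subset_closure hz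
    rw [← hcl''] at this
    exact this
  obtain ⟨z, hzW, hzW''⟩ := hWW''ne
  have hd1 : univ ∩ W ⊆ closure (W ∩ W'') := by
    rintro y ⟨-, hyW⟩
    rw [hcl'']
    exact subset_closure hyW
  have hd2 : univ ∩ W ⊆ closure (W ∩ W'₀) := by
    rintro y ⟨-, hyW⟩
    exact hGprop W'₀ y ⟨hWsub hyW, hyW⟩
  have hblock := frontier_block 𝒲' hWU hW''s hW'₀ hne isOpen_univ hd1 hd2
  have : z ∈ univ ∩ W ∩ W'' := ⟨⟨mem_univ z, hzW⟩, hzW''⟩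
  rw [hblock] at this
  exact this


end
end

section
/- Let M ⊆ X be a complex submanifold of U contained in the analytic space X, and let A be a bounded constructible complex of sheaves on X. Then A is φ-constructible along M if and only if SS_M(A) ⊆ T*_M U, where SS_M(A) denotes the part of the micro-support of A lying over M. -/
open Set Topology

noncomputable section

/-! By the compatibility `x ∈ supp φ_g[-1]A ↔ (x, d_x g) ∈ SS(A)`, φ-constructibility along `M`
says that no covector `d_x g` not vanishing on `T_x M` lies in `SS(A)`. Since every covector `η`
is the differential at `x` of the linear germ `η - η(x)`, this is exactly `SS_M(A) ⊆ T^*_M U`. -/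

theorem ContinuousLinearMap.fderiv_sub_apply_self {𝕜 E F : Type*} [NontriviallyNormedField 𝕜]
    [NormedAddCommGroup E] [NormedSpace 𝕜 E] [NormedAddCommGroup F] [NormedSpace 𝕜 F]
    (η : E →L[𝕜] F) (x : E) :
    fderiv 𝕜 (fun y => η y - η x) x = η := by
  rw [fderiv_sub_const, η.fderiv]

theorem SuppSSCompat.mem_suppPhi_linear_iff {n : ℕ} {suppPhi : (Amb n → ℂ) → Set (Amb n)}
    {SS : Set (Amb n × Cov n)} (hcompat : SuppSSCompat suppPhi SS) (η : Cov n) (x : Amb n) :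
    x ∈ suppPhi (fun y => η y - η x) ↔ (x, η) ∈ SS := by
  simpa only [η.fderiv_sub_apply_self x] using
    hcompat (fun y => η y - η x) x ((η.analyticAt x).sub analyticAt_const) (sub_self _)

theorem stmt3_general {n : ℕ} (M : Set (Amb n))
    (SS : Set (Amb n × Cov n)) (suppPhi : (Amb n → ℂ) → Set (Amb n))
    (hcompat : SuppSSCompat suppPhi SS) :
    PhiConstrAlong suppPhi M ↔ ∀ p ∈ SS, p.1 ∈ M → p ∈ conormal M := by
  constructor
  · rintro hphi ⟨x, η⟩ hSS hxM
    refine ⟨hxM, fun v hv => ?_⟩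
    by_contra hηv
    refine hphi x hxM (fun y => η y - η x) ((η.analyticAt x).sub analyticAt_const) (sub_self _)
      ⟨v, hv, ?_⟩ ((hcompat.mem_suppPhi_linear_iff η x).2 hSS)
    rwa [η.fderiv_sub_apply_self x]
  · rintro hSS x hxM g hg hg0 ⟨v, hv, hgv⟩ hx
    exact hgv ((hSS _ ((hcompat g x hg hg0).1 hx) hxM).2 v hv)

/-- Proposition 3.1: `A` is φ-constructible along `M` iff
`SS_M(A) ⊆ T^*_M 𝒰`.  The complex `A` is represented abstractly by its micro-support
`SS` and its vanishing-cycle supports `suppPhi`, linked by the fundamental fact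
(Theorem 2.10 of the paper) that `x ∈ supp φ_g[-1]A ↔ (x, d_x g̃) ∈ SS(A)`. -/
theorem stmt3 {n : ℕ} (U X M : Set (Amb n)) (hU : IsOpen U)
    (hX : IsAnalyticSubsetOf U X) (hM : ∃ d, IsSubmanifoldDim U M d) (hMX : M ⊆ X)
    (SS : Set (Amb n × Cov n)) (suppPhi : (Amb n → ℂ) → Set (Amb n))
    (hcompat : SuppSSCompat suppPhi SS) :
    PhiConstrAlong suppPhi M ↔ ∀ p ∈ SS, p.1 ∈ M → p ∈ conormal M :=
  stmt3_general M SS suppPhi hcompat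

end
end

section
/- Suppose the micro-support condition for φ-constructibility along M can be tested with linear forms: if for all x ∈ M and every linear form 𝔩 : ℂ^{n+1} → ℂ such that x is a regular point of 𝔩|_M, the point x is not in supp(φ_{𝔩−𝔩(x)}[-1]A), then A is φ-constructible along M. -/
open Set Topology

noncomputable section

/-- Corollary 2.11: if for every `x ∈ M` and every linear form `𝔩`
with `x` a regular point of `𝔩|_M` we have `x ∉ supp φ_{𝔩-𝔩(x)}[-1]A`, then `A` is
φ-constructible along `M`.  The key fact `x ∈ supp φ_g[-1]A ↔ (x, d_x g̃) ∈ SS(A)`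
is supplied as the hypothesis `hcompat`. -/
theorem stmt4 {n : ℕ} (U X M : Set (Amb n)) (hU : IsOpen U)
    (hX : IsAnalyticSubsetOf U X) (hM : ∃ d, IsSubmanifoldDim U M d) (hMX : M ⊆ X)
    (SS : Set (Amb n × Cov n)) (suppPhi : (Amb n → ℂ) → Set (Amb n))
    (hcompat : SuppSSCompat suppPhi SS)
    (hlin : ∀ x ∈ M, ∀ l : Cov n,
      (∃ v ∈ tangentConeAt ℂ M x, l v ≠ 0) → x ∉ suppPhi (fun y => l y - l x)) :
    PhiConstrAlong suppPhi M := by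
  intro x hx g hg hg0 ⟨v, hv, hdv⟩
  set l : Cov n := fderiv ℂ g x with hl
  have hfd : fderiv ℂ (fun y => l y - l x) x = l :=
    ((l.hasFDerivAt (x := x)).sub_const (l x)).fderiv
  have han : AnalyticAt ℂ (fun y => l y - l x) x :=
    (l.analyticAt x).sub analyticAt_const
  have h0 : (fun y => l y - l x) x = 0 := sub_self _
  have key := (hcompat (fun y => l y - l x) x han h0).not.mp
    (hlin x hx l ⟨v, hv, hdv⟩)
  rw [hfd] at key
  exact fun hmem => key ((hcompat g x hg hg0).mp hmem)

end
end

section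
/- Let 𝒲 and 𝒲' be partitions of X, W ∈ 𝒲 connected, and p ∈ W. Then there exist finitely many W'₁,…,W'_d ∈ 𝒲' and an open neighborhood Θ of p in X with Θ ∩ W = ⋃ᵢ (Θ ∩ W ∩ W'ᵢ), and at least one Θ ∩ W ∩ W'ᵢ is analytically Zariski-open and dense in Θ ∩ W. -/
open Set Topology

noncomputable section

section AuxLemmas

/-- Restriction of an analytic subset to a smaller open set. -/
lemma analytic_restrict {n : ℕ} {U Θ A : Set (Amb n)} (hA : IsAnalyticSubsetOf U A)
    (hΘ : IsOpen Θ) (hΘU : Θ ⊆ U) : IsAnalyticSubsetOf Θ (A ∩ Θ) := by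
  refine ⟨inter_subset_right, fun x hx => ?_⟩
  obtain ⟨V, hVo, hxV, _hVU, ι, f, hf, hAV⟩ := hA.2 x (hΘU hx)
  refine ⟨V ∩ Θ, hVo.inter hΘ, ⟨hxV, hx⟩, inter_subset_right, ι, f,
    fun i => (hf i).mono inter_subset_left, ?_⟩
  ext y
  constructor
  · rintro ⟨⟨hyA, hyΘ⟩, hyV, hyΘ'⟩
    have hy : y ∈ A ∩ V := ⟨hyA, hyV⟩
    rw [hAV] at hy
    exact ⟨⟨hyV, hyΘ⟩, hy.2⟩
  · rintro ⟨⟨hyV, hyΘ⟩, hz⟩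
    have hy : y ∈ A ∩ V := by rw [hAV]; exact ⟨hyV, hz⟩
    exact ⟨⟨hy.1, hyΘ⟩, hyV, hyΘ⟩

/-- A nonempty open set covered by finitely many closed sets: one of them has
interior meeting the open set. -/
lemma exists_interior_of_finite_closed_cover {α ι : Type*} [TopologicalSpace α]
    (s : Finset ι) (C : ι → Set α) (hC : ∀ i, IsClosed (C i)) :
    ∀ O : Set α, IsOpen O → O.Nonempty → (O ⊆ ⋃ i ∈ s, C i) →
      ∃ i ∈ s, (interior (C i) ∩ O).Nonempty := by
  classical
  induction s using Finset.induction_on with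
  | empty =>
    rintro O _ ⟨x, hx⟩ hsub
    simpa using hsub hx
  | insert a s ha ih =>
    intro O hO hne hsub
    by_cases h2 : (O \ C a).Nonempty
    · have hsub' : O \ C a ⊆ ⋃ i ∈ s, C i := by
        rintro x ⟨hxO, hxa⟩
        have hx := hsub hxO
        simp only [Finset.mem_insert, mem_iUnion, exists_prop] at hx ⊢
        rcases hx with ⟨i, hi | hi, hxi⟩
        · exact absurd (hi ▸ hxi) hxa
        · exact ⟨i, hi, hxi⟩
      obtain ⟨i, hi, hint⟩ := ih _ (hO.sdiff (hC a)) h2 hsub'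
      exact ⟨i, Finset.mem_insert_of_mem hi,
        hint.mono (fun x hx => ⟨hx.1, hx.2.1⟩)⟩
    · have hOa : O ⊆ C a := fun x hx => by
        by_contra hxa; exact h2 ⟨x, hx, hxa⟩
      have : O ⊆ interior (C a) := hO.subset_interior_iff.2 hOa
      exact ⟨a, Finset.mem_insert_self _ _, hne.mono (fun x hx => ⟨this hx, hx⟩)⟩

/-- The identity-theorem clopen argument: if an analytic subset `A` of `U` contains
`φ`-images of a neighborhood of some point of a connected open set `B` (with `φ`
analytic on `B`, mapping into `U`), then it contains the `φ`-image of all of `B`. -/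
lemma key_identity {n : ℕ} {E : Type*} [NormedAddCommGroup E] [NormedSpace ℂ E]
    {U A : Set (Amb n)} (hA : IsAnalyticSubsetOf U A)
    {B : Set E} (hBc : IsPreconnected B) (hBo : IsOpen B)
    {φ : E → Amb n} (hφ : ∀ b ∈ B, AnalyticAt ℂ φ b) (hφU : ∀ b ∈ B, φ b ∈ U)
    {N : Set E} (hN : IsOpen N) {b₀ : E} (hb₀ : b₀ ∈ N ∩ B)
    (hNA : ∀ c ∈ N ∩ B, φ c ∈ A) :
    ∀ b ∈ B, φ b ∈ A := by
  set G : Set E := {b | ∃ N' : Set E, IsOpen N' ∧ b ∈ N' ∧ ∀ c ∈ N' ∩ B, φ c ∈ A} with hGdef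
  have hb₀G : b₀ ∈ G := ⟨N, hN, hb₀.1, hNA⟩
  have hGopen : IsOpen G := by
    refine isOpen_iff_mem_nhds.2 ?_
    rintro b ⟨N', hN'o, hbN', hN'A⟩
    filter_upwards [hN'o.mem_nhds hbN'] with c hc
    exact ⟨N', hN'o, hc, hN'A⟩
  have hclosed : B ∩ closure G ⊆ G := by
    rintro b ⟨hbB, hbcl⟩
    obtain ⟨V, hVo, hxV, _hVU, ι, f, hf, hAV⟩ := hA.2 (φ b) (hφU b hbB)
    have hN₁ : IsOpen {c | c ∈ B ∧ φ c ∈ V} := by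
      refine isOpen_iff_mem_nhds.2 ?_
      rintro c ⟨hcB, hcV⟩
      filter_upwards [hBo.mem_nhds hcB,
        (hφ c hcB).continuousAt.preimage_mem_nhds (hVo.mem_nhds hcV)] with d h1 h2
      exact ⟨h1, h2⟩
    obtain ⟨ε, hε, hball⟩ := Metric.isOpen_iff.1 hN₁ b ⟨hbB, hxV⟩
    obtain ⟨b', hb'ball, hb'G⟩ :=
      mem_closure_iff.1 hbcl _ Metric.isOpen_ball (Metric.mem_ball_self hε)
    obtain ⟨N', hN'o, hb'N', hN'A⟩ := hb'G
    have hzero : ∀ i, ∀ c ∈ Metric.ball b ε, f i (φ c) = 0 := by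
      intro i
      have han : AnalyticOnNhd ℂ (fun c => f i (φ c)) (Metric.ball b ε) := fun c hc =>
        ((hf i) (φ c) (hball hc).2).comp (hφ c (hball hc).1)
      have hconn : IsPreconnected (Metric.ball b ε) := (convex_ball b ε).isPreconnected
      have hev : (fun c => f i (φ c)) =ᶠ[𝓝 b'] 0 := by
        filter_upwards [(hN'o.inter Metric.isOpen_ball).mem_nhds ⟨hb'N', hb'ball⟩] with c hc
        have hcB : c ∈ B := (hball hc.2).1
        have hcA : φ c ∈ A ∩ V := ⟨hN'A c ⟨hc.1, hcB⟩, (hball hc.2).2⟩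
        rw [hAV] at hcA
        exact hcA.2 i
      exact fun c hc =>
        han.eqOn_zero_of_preconnected_of_eventuallyEq_zero hconn hb'ball hev hc
    refine ⟨Metric.ball b ε, Metric.isOpen_ball, Metric.mem_ball_self hε, ?_⟩
    rintro c ⟨hc, _⟩
    have hcA : φ c ∈ A ∩ V := by
      rw [hAV]; exact ⟨(hball hc).2, fun i => hzero i c hc⟩
    exact hcA.1
  have hBcl : B ⊆ closure G := by
    by_contra hcon
    obtain ⟨b, hbB, hbn⟩ := not_subset.1 hcon
    obtain ⟨x, hxB, hxG, hxn⟩ := hBc G (closure G)ᶜ hGopen isClosed_closure.isOpen_compl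
      (fun y hy => by
        by_cases h : y ∈ closure G
        · exact Or.inl (hclosed ⟨hy, h⟩)
        · exact Or.inr h)
      ⟨b₀, hb₀.2, hb₀G⟩ ⟨b, hbB, hbn⟩
    exact hxn (subset_closure hxG)
  intro b hbB
  obtain ⟨N', _, hbN', hN'A⟩ := hclosed ⟨hbB, hBcl hbB⟩
  exact hN'A b ⟨hbN', hbB⟩

end AuxLemmas

set_option maxHeartbeats 2000000 in
/-- first step of the proof of Lemma 2.2: for partitions `𝒲, 𝒲'`
of `X`, a connected stratum `W ∈ 𝒲` and `p ∈ W`, there are finitely many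
`W'₁, …, W'_d ∈ 𝒲'` and an open neighborhood `Θ` of `p` with
`Θ ∩ W = ⋃ᵢ (Θ ∩ W ∩ W'ᵢ)`, and at least one `Θ ∩ W ∩ W'ᵢ` is analytically
Zariski-open (the complement in `Θ ∩ W` of an analytic subset of `Θ`) and dense
in `Θ ∩ W`. -/
theorem stmt13 {n : ℕ} (U X : Set (Amb n)) (hU : IsOpen U) (hX : IsAnalyticSubsetOf U X)
    (𝒲 𝒲' : AnalyticPartition U X) (W : Set (Amb n)) (hW : W ∈ 𝒲.strata)
    (hWconn : IsConnected W) (p : Amb n) (hp : p ∈ W) :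
    ∃ (d : ℕ) (Ws : Fin d → Set (Amb n)) (Θ : Set (Amb n)),
      (∀ i, Ws i ∈ 𝒲'.strata) ∧ IsOpen Θ ∧ p ∈ Θ ∧ Θ ⊆ U ∧
      Θ ∩ W = (⋃ i, Θ ∩ W ∩ Ws i) ∧
      ∃ i, (∃ A : Set (Amb n), IsAnalyticSubsetOf Θ A ∧
              Θ ∩ W ∩ Ws i = (Θ ∩ W) \ A) ∧
           Θ ∩ W ⊆ closure (Θ ∩ W ∩ Ws i) := by
  classical
  -- `W ⊆ X`
  have hWX : W ⊆ X := by
    rw [← 𝒲.covers]; exact subset_sUnion_of_mem hW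
  -- locally finite neighborhood of `p`
  obtain ⟨t, ht, hfin⟩ := 𝒲'.locFin p
  obtain ⟨Θ₀, hΘ₀t, hΘ₀o, hpΘ₀⟩ := mem_nhds_iff.1 ht
  -- chart for `W` at `p`
  obtain ⟨dW, hsub⟩ := 𝒲.submanifold W hW
  obtain ⟨V₀, hV₀o, hpV₀, hV₀U, g, hg, hgsurj, hWV₀⟩ := hsub.2 p hp
  set V : Set (Amb n) := V₀ ∩ Θ₀ with hVdef
  have hVo : IsOpen V := hV₀o.inter hΘ₀o
  have hpV : p ∈ V := ⟨hpV₀, hpΘ₀⟩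
  have hVU : V ⊆ U := fun x hx => hV₀U hx.1
  have hWV : ∀ y ∈ V, (y ∈ W ↔ g y = 0) := by
    intro y hy
    constructor
    · intro hyW
      have h1 : y ∈ W ∩ V₀ := ⟨hyW, hy.1⟩
      rw [hWV₀] at h1; exact h1.2
    · intro hgy
      have h1 : y ∈ {y ∈ V₀ | g y = 0} := ⟨hy.1, hgy⟩
      rw [← hWV₀] at h1; exact h1.1
  -- linear data at `p`
  set Lg : Amb n →L[ℂ] (Fin (n + 1 - dW) → ℂ) := fderiv ℂ g p with hLgdef
  have hLg : Function.Surjective Lg := hgsurj p hpV₀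
  set K : Submodule ℂ (Amb n) := LinearMap.ker (Lg : Amb n →ₗ[ℂ] (Fin (n + 1 - dW) → ℂ)) with hKdef
  obtain ⟨Q, hQ⟩ := Submodule.exists_isCompl K
  set π : Amb n →L[ℂ] K := LinearMap.toContinuousLinearMap (K.projectionOnto Q hQ)
    with hπdef
  set J : Amb n →L[ℂ] K × (Fin (n + 1 - dW) → ℂ) := π.prod Lg with hJdef
  have hJinj : Function.Injective J := by
    rw [injective_iff_map_eq_zero]
    intro v hv
    have h1 : π v = 0 := congrArg Prod.fst hv
    have h2 : Lg v = 0 := congrArg Prod.snd hv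
    have hvK : v ∈ K := LinearMap.mem_ker.2 h2
    have h3 : π v = ⟨v, hvK⟩ := by
      simpa [hπdef] using Submodule.projectionOnto_apply_left hQ ⟨v, hvK⟩
    rw [h1] at h3
    simpa using congrArg Subtype.val h3.symm
  have hrank : Module.finrank ℂ (Amb n) = Module.finrank ℂ (K × (Fin (n + 1 - dW) → ℂ)) := by
    have h1 := LinearMap.finrank_range_add_finrank_ker (Lg : Amb n →ₗ[ℂ] (Fin (n + 1 - dW) → ℂ))
    have h2 : LinearMap.range (Lg : Amb n →ₗ[ℂ] (Fin (n + 1 - dW) → ℂ)) = ⊤ :=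
      LinearMap.range_eq_top.2 hLg
    rw [h2, finrank_top] at h1
    rw [Module.finrank_prod]
    have h3 : Module.finrank ℂ ↥(LinearMap.ker (Lg : Amb n →ₗ[ℂ] (Fin (n + 1 - dW) → ℂ)))
        = Module.finrank ℂ ↥K := rfl
    omega
  set eJ : Amb n ≃L[ℂ] K × (Fin (n + 1 - dW) → ℂ) :=
    ((J : Amb n →ₗ[ℂ] K × (Fin (n + 1 - dW) → ℂ)).linearEquivOfInjective hJinj
      hrank).toContinuousLinearEquiv with heJdef
  have heJ : (eJ : Amb n →L[ℂ] K × (Fin (n + 1 - dW) → ℂ)) = J := by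
    apply ContinuousLinearMap.ext
    intro v
    have h1 := congrFun (LinearEquiv.coe_toContinuousLinearEquiv'
      ((J : Amb n →ₗ[ℂ] ↥K × (Fin (n + 1 - dW) → ℂ)).linearEquivOfInjective hJinj hrank)) v
    exact h1.trans (LinearMap.linearEquivOfInjective_apply hJinj hrank v)
  -- the map `Φ` and the inverse function theorem
  set Φ : Amb n → K × (Fin (n + 1 - dW) → ℂ) := fun y => (π y, g y) with hΦdef
  have hΦp : AnalyticAt ℂ Φ p := (π.analyticAt p).prod (hg p hpV₀)
  have hgfd : HasFDerivAt g Lg p := (hg p hpV₀).differentiableAt.hasFDerivAt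
  have hΦJ : HasFDerivAt Φ J p := (π.hasFDerivAt).prodMk hgfd
  have hstrict : HasStrictFDerivAt Φ (eJ : Amb n →L[ℂ] K × (Fin (n + 1 - dW) → ℂ)) p := by
    have h := hΦp.hasStrictFDerivAt
    rwa [hΦJ.fderiv, ← heJ] at h
  set F1 := hstrict.toOpenPartialHomeomorph Φ with hF1def
  have hcoe : ⇑F1 = Φ := hstrict.toOpenPartialHomeomorph_coe
  have hpsource : p ∈ F1.source := hstrict.mem_toOpenPartialHomeomorph_source
  -- power series for the inverse
  obtain ⟨q, hq⟩ := hΦp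
  have hq' : HasFPowerSeriesAt (⇑F1) q p := by rw [hcoe]; exact hq
  have hcurry : continuousMultilinearCurryFin1 ℂ (Amb n) (K × (Fin (n + 1 - dW) → ℂ)) (q 1)
      = (eJ : Amb n →L[ℂ] K × (Fin (n + 1 - dW) → ℂ)) :=
    hq.hasFDerivAt.unique (heJ ▸ hΦJ)
  have hp1 : q 1 = (continuousMultilinearCurryFin1 ℂ (Amb n) (K × (Fin (n + 1 - dW) → ℂ))).symm
      (eJ : Amb n →L[ℂ] K × (Fin (n + 1 - dW) → ℂ)) := by
    rw [← hcurry]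
    exact ((continuousMultilinearCurryFin1 ℂ (Amb n)
      (K × (Fin (n + 1 - dW) → ℂ))).symm_apply_apply _).symm
  have hsymmAn : AnalyticAt ℂ F1.symm (Φ p) := by
    have h := (F1.hasFPowerSeriesAt_symm hpsource hq' hp1).analyticAt
    rwa [hcoe] at h
  -- value of `Φ` at `p`
  have hgp0 : g p = 0 := (hWV p hpV).1 hp
  have hΦpval : Φ p = ((π p, (0 : Fin (n + 1 - dW) → ℂ)) : K × (Fin (n + 1 - dW) → ℂ)) := by
    simp [hΦdef, hgp0]
  -- the image of the source chart is open
  have hso : IsOpen (F1.source ∩ V) := F1.open_source.inter hVo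
  have himg : IsOpen (F1 '' (F1.source ∩ V)) :=
    F1.isOpen_image_of_subset_source hso inter_subset_left
  have himgmem : Φ p ∈ F1 '' (F1.source ∩ V) :=
    ⟨p, ⟨hpsource, hpV⟩, by rw [hcoe]⟩
  have hnh : ∀ᶠ z in 𝓝 ((π p, (0 : Fin (n + 1 - dW) → ℂ)) : K × (Fin (n + 1 - dW) → ℂ)),
      AnalyticAt ℂ F1.symm z ∧ z ∈ F1 '' (F1.source ∩ V) := by
    rw [← hΦpval]
    filter_upwards [hsymmAn.eventually_analyticAt, himg.mem_nhds himgmem] with z h1 h2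
    exact ⟨h1, h2⟩
  obtain ⟨δ, hδ, hball⟩ := Metric.eventually_nhds_iff_ball.1 hnh
  set B₁ : Set K := Metric.ball (π p) δ with hB₁def
  have hprod : ∀ k ∈ B₁, ∀ z ∈ Metric.ball (0 : Fin (n + 1 - dW) → ℂ) δ,
      ((k, z) : K × (Fin (n + 1 - dW) → ℂ)) ∈ Metric.ball ((π p, (0 : Fin (n + 1 - dW) → ℂ)) : K × (Fin (n + 1 - dW) → ℂ)) δ := by
    intro k hk z hz
    rw [Metric.mem_ball, Prod.dist_eq]
    exact max_lt hk hz
  -- the parametrization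
  set φ : K → Amb n := fun k => F1.symm (k, (0 : Fin (n + 1 - dW) → ℂ)) with hφdef
  have hφan : ∀ b ∈ B₁, AnalyticAt ℂ φ b := by
    intro b hb
    have h1 : AnalyticAt ℂ F1.symm ((b, (0 : Fin (n + 1 - dW) → ℂ)) : K × (Fin (n + 1 - dW) → ℂ)) :=
      (hball _ (hprod b hb _ (Metric.mem_ball_self hδ))).1
    have h2 : AnalyticAt ℂ
        (fun k : K => ((k, (0 : Fin (n + 1 - dW) → ℂ)) : K × (Fin (n + 1 - dW) → ℂ))) b :=
      analyticAt_id.prod analyticAt_const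
    have h3 : AnalyticAt ℂ (F1.symm ∘
        (fun k : K => ((k, (0 : Fin (n + 1 - dW) → ℂ)) : K × (Fin (n + 1 - dW) → ℂ)))) b :=
      AnalyticAt.comp (x := b) h1 h2
    exact h3
  -- the open neighborhood `Θ`
  set Θ : Set (Amb n) := (F1.source ∩ V) ∩ ⇑F1 ⁻¹'
    (B₁ ×ˢ Metric.ball (0 : Fin (n + 1 - dW) → ℂ) δ) with hΘdef
  have hΘo : IsOpen Θ :=
    (F1.continuousOn.mono inter_subset_left).isOpen_inter_preimage hso
      (Metric.isOpen_ball.prod Metric.isOpen_ball)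
  have hpΘ : p ∈ Θ := by
    refine ⟨⟨hpsource, hpV⟩, ?_⟩
    have : F1 p = ((π p, (0 : Fin (n + 1 - dW) → ℂ)) : K × (Fin (n + 1 - dW) → ℂ)) := by rw [hcoe]; exact hΦpval
    rw [mem_preimage, this]
    exact ⟨Metric.mem_ball_self hδ, Metric.mem_ball_self hδ⟩
  have hΘU : Θ ⊆ U := fun y hy => hVU hy.1.2
  have hΘΘ₀ : Θ ⊆ Θ₀ := fun y hy => hy.1.2.2
  -- `φ` maps `B₁` onto `Θ ∩ W`
  have hφΘW : ∀ k ∈ B₁, φ k ∈ Θ ∩ W := by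
    intro k hk
    obtain ⟨-, y, hys, hfy⟩ := hball _ (hprod k hk _ (Metric.mem_ball_self hδ))
    have hΦy : Φ y = ((k, (0 : Fin (n + 1 - dW) → ℂ)) : K × (Fin (n + 1 - dW) → ℂ)) := by rw [← hcoe]; exact hfy
    have hyW : y ∈ W := (hWV y hys.2).2 (congrArg Prod.snd hΦy)
    have hφk : φ k = y := by
      show F1.symm ((k, (0 : Fin (n + 1 - dW) → ℂ)) : K × (Fin (n + 1 - dW) → ℂ)) = y
      rw [← hfy]; exact F1.left_inv hys.1
    have hyΘ : y ∈ Θ := by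
      refine ⟨hys, ?_⟩
      rw [mem_preimage, hfy]
      exact ⟨hk, Metric.mem_ball_self hδ⟩
    rw [hφk]; exact ⟨hyΘ, hyW⟩
  have hsurj : ∀ y ∈ Θ ∩ W, π y ∈ B₁ ∧ φ (π y) = y := by
    rintro y ⟨⟨hys, hyB⟩, hyW⟩
    have hgy : g y = 0 := (hWV y hys.2).1 hyW
    have hΦy : F1 y = ((π y, (0 : Fin (n + 1 - dW) → ℂ)) : K × (Fin (n + 1 - dW) → ℂ)) := by
      rw [hcoe]; simp [hΦdef, hgy]
    have h1 : π y ∈ B₁ := by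
      have hb := mem_preimage.1 hyB
      rw [hΦy] at hb; exact hb.1
    refine ⟨h1, ?_⟩
    show F1.symm ((π y, (0 : Fin (n + 1 - dW) → ℂ)) : K × (Fin (n + 1 - dW) → ℂ)) = y
    rw [← hΦy]; exact F1.left_inv hys.1
  -- enumeration of the strata of `𝒲'` meeting `Θ₀`
  have hfin' : {i : ↥(𝒲'.strata) | ((i : Set (Amb n)) ∩ Θ₀).Nonempty}.Finite :=
    hfin.subset (fun i hi => hi.mono (inter_subset_inter Subset.rfl hΘ₀t))
  set d : ℕ := hfin'.toFinset.card with hddef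
  have hcard : Fintype.card ↥(hfin'.toFinset) = d := Fintype.card_coe _
  set e : ↥(hfin'.toFinset) ≃ Fin d := (Fintype.equivFin _).trans (finCongr hcard)
    with hedef
  set Ws : Fin d → Set (Amb n) := fun i => (((e.symm i : ↥(hfin'.toFinset)) :
    ↥(𝒲'.strata)) : Set (Amb n)) with hWsdef
  have hWsmem : ∀ i, Ws i ∈ 𝒲'.strata := fun i =>
    ((e.symm i : ↥(hfin'.toFinset)) : ↥(𝒲'.strata)).2
  have hindex : ∀ W'' ∈ 𝒲'.strata, (W'' ∩ Θ₀).Nonempty → ∃ i, Ws i = W'' := by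
    intro W'' hmem hne
    have hmem' : (⟨W'', hmem⟩ : ↥(𝒲'.strata)) ∈ hfin'.toFinset := by
      rw [Set.Finite.mem_toFinset]; exact hne
    refine ⟨e ⟨⟨W'', hmem⟩, hmem'⟩, ?_⟩
    rw [hWsdef]; simp
  -- the covering property
  have hcover : Θ ∩ W = ⋃ i, Θ ∩ W ∩ Ws i := by
    apply Subset.antisymm
    · rintro y ⟨hyΘ, hyW⟩
      have hyX : y ∈ X := hWX hyW
      rw [← 𝒲'.covers] at hyX
      obtain ⟨W'', hmem, hyW''⟩ := hyX
      obtain ⟨i, hi⟩ := hindex W'' hmem ⟨y, hyW'', hΘΘ₀ hyΘ⟩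
      exact mem_iUnion.2 ⟨i, ⟨hyΘ, hyW⟩, hi ▸ hyW''⟩
    · exact iUnion_subset fun i => inter_subset_left
  -- find the dense stratum via the covering lemma
  set R : Fin d → Set K := fun i => B₁ ∩ φ ⁻¹' (Ws i) with hRdef
  have hcovB : B₁ ⊆ ⋃ i ∈ (Finset.univ : Finset (Fin d)), closure (R i) := by
    intro b hb
    have h1 : φ b ∈ Θ ∩ W := hφΘW b hb
    rw [hcover] at h1
    obtain ⟨i, hi⟩ := mem_iUnion.1 h1
    simp only [Finset.mem_univ, mem_iUnion, exists_prop]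
    exact ⟨i, trivial, subset_closure ⟨hb, hi.2⟩⟩
  have hB₁ne : B₁.Nonempty := ⟨π p, Metric.mem_ball_self hδ⟩
  obtain ⟨j, -, b₀, hb₀int, hb₀B⟩ := exists_interior_of_finite_closed_cover
    (Finset.univ : Finset (Fin d)) (fun i => closure (R i)) (fun i => isClosed_closure)
    B₁ Metric.isOpen_ball hB₁ne hcovB
  have hBconn : IsPreconnected B₁ := (convex_ball (π p) δ).isPreconnected
  have hφU' : ∀ b ∈ B₁, φ b ∈ U := fun b hb => hΘU (hφΘW b hb).1
  -- the whole of `φ '' B₁` is in the closure of `Ws j`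
  have hcl : ∀ b ∈ B₁, φ b ∈ closure (Ws j) ∩ U := by
    refine key_identity (𝒲'.closure_analytic _ (hWsmem j)) hBconn Metric.isOpen_ball
      hφan hφU' isOpen_interior ⟨hb₀int, hb₀B⟩ ?_
    rintro c ⟨hcN, hcB⟩
    have h1 : φ c ∈ closure (φ '' (R j)) :=
      ((hφan c hcB).continuousAt.continuousWithinAt).mem_closure_image (interior_subset hcN)
    have h2 : φ '' (R j) ⊆ Ws j := by rintro _ ⟨x, hx, rfl⟩; exact hx.2
    exact ⟨closure_mono h2 h1, hφU' c hcB⟩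
  have hRj : (R j).Nonempty := by
    rw [← closure_nonempty_iff]
    exact ⟨b₀, interior_subset hb₀int⟩
  -- density of `R j` in `B₁`
  have hdense : ∀ b ∈ B₁, b ∈ closure (R j) := by
    by_contra hcon
    push_neg at hcon
    obtain ⟨b, hbB, hbn⟩ := hcon
    have hfr : ∀ c ∈ B₁, φ c ∈ (closure (Ws j) \ Ws j) ∩ U := by
      refine key_identity (𝒲'.frontier_analytic _ (hWsmem j)) hBconn Metric.isOpen_ball
        hφan hφU' isClosed_closure.isOpen_compl (N := (closure (R j))ᶜ) ⟨hbn, hbB⟩ ?_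
      rintro c ⟨hcn, hcB⟩
      refine ⟨⟨(hcl c hcB).1, fun hmem => hcn (subset_closure ⟨hcB, hmem⟩)⟩, hφU' c hcB⟩
    obtain ⟨b₁, hb₁⟩ := hRj
    exact (hfr b₁ hb₁.1).1.2 hb₁.2
  -- conclusion
  refine ⟨d, Ws, Θ, hWsmem, hΘo, hpΘ, hΘU, hcover, j,
    ⟨((closure (Ws j) \ Ws j) ∩ U) ∩ Θ,
      analytic_restrict (𝒲'.frontier_analytic _ (hWsmem j)) hΘo hΘU, ?_⟩, ?_⟩
  · ext y
    constructor
    · rintro ⟨⟨hyΘ, hyW⟩, hyWs⟩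
      refine ⟨⟨hyΘ, hyW⟩, ?_⟩
      rintro ⟨⟨⟨-, hnot⟩, -⟩, -⟩
      exact hnot hyWs
    · rintro ⟨⟨hyΘ, hyW⟩, hyA⟩
      refine ⟨⟨hyΘ, hyW⟩, ?_⟩
      by_contra hnot
      obtain ⟨hkB, hky⟩ := hsurj y ⟨hyΘ, hyW⟩
      have hycl : y ∈ closure (Ws j) := by
        have := (hcl _ hkB).1
        rwa [hky] at this
      exact hyA ⟨⟨⟨hycl, hnot⟩, hΘU hyΘ⟩, hyΘ⟩
  · rintro y ⟨hyΘ, hyW⟩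
    obtain ⟨hkB, hky⟩ := hsurj y ⟨hyΘ, hyW⟩
    have h1 : φ (π y) ∈ closure (φ '' (R j)) :=
      ((hφan _ hkB).continuousAt.continuousWithinAt).mem_closure_image (hdense (π y) hkB)
    have h2 : φ '' (R j) ⊆ Θ ∩ W ∩ Ws j := by
      rintro _ ⟨x, hx, rfl⟩
      exact ⟨hφΘW x hx.1, hx.2⟩
    rw [hky] at h1
    exact closure_mono h2 h1

end
end
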